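/- arXiv:0904.3305 — 3 statements merged into one kernel-verified Lean document; each statement's English description precedes it below -/
import Mathlib

section
/- Let X(t) = S(t)X₀ + ∫₀ᵗ S(t−s) a(s) ds for t ∈ [0,T]. Then for every t ∈ [0,T], ‖X(t)‖² ≤ e^{2λt} ‖X₀‖² + 2 ∫₀ᵗ e^{2λ(t−s)} ⟨X(s), a(s)⟩ ds. (Energy-type inequality, Proposition 2.3.) -/
open MeasureTheory Filter Topology
open scoped RealInnerProductSpace

lemma clm_apply_jointCont {H : Type*} [NormedAddCommGroup H] [NormedSpace ℝ H]
    (F : ℝ → H →L[ℝ] H) (hFx : ∀ x : H, Continuous fun h => F h x)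
    (B : ℝ → ℝ) (hB : Continuous B) (hFB : ∀ h, ‖F h‖ ≤ B h) :
    Continuous fun p : ℝ × H => F p.1 p.2 := by
  rw [continuous_iff_continuousAt]
  intro p
  rw [ContinuousAt, tendsto_iff_norm_sub_tendsto_zero]
  have key : ∀ q : ℝ × H, ‖F q.1 q.2 - F p.1 p.2‖
      ≤ B q.1 * ‖q.2 - p.2‖ + ‖F q.1 p.2 - F p.1 p.2‖ := by
    intro q
    have h1 : F q.1 q.2 - F p.1 p.2 = F q.1 (q.2 - p.2) + (F q.1 p.2 - F p.1 p.2) := by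
      simp [map_sub]
    rw [h1]
    refine (norm_add_le _ _).trans (add_le_add_left ?_ _)
    exact ((F q.1).le_opNorm _).trans
      (mul_le_mul_of_nonneg_right (hFB q.1) (norm_nonneg _))
  have hcont : Continuous fun q : ℝ × H =>
      B q.1 * ‖q.2 - p.2‖ + ‖F q.1 p.2 - F p.1 p.2‖ := by
    refine ((hB.comp continuous_fst).mul ((continuous_snd.sub continuous_const).norm)).add ?_
    exact (((hFx p.2).comp continuous_fst).sub continuous_const).norm
  have hval : B p.1 * ‖p.2 - p.2‖ + ‖F p.1 p.2 - F p.1 p.2‖ = 0 := by simp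
  have h2 := hcont.tendsto p
  rw [hval] at h2
  exact squeeze_zero (fun q => norm_nonneg _) key h2

set_option maxHeartbeats 2000000 in
/-- Energy-type inequality (Proposition 2.3). -/
theorem energy_type_inequality
    {H : Type*} [NormedAddCommGroup H] [InnerProductSpace ℝ H] [CompleteSpace H]
    [TopologicalSpace.SeparableSpace H]
    (T : ℝ) (hT : 0 < T)
    (S : ℝ → H →L[ℝ] H)
    (hS0 : S 0 = ContinuousLinearMap.id ℝ H)
    (hSadd : ∀ s t : ℝ, 0 ≤ s → 0 ≤ t → S (s + t) = (S s).comp (S t))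
    (hScont : ∀ x : H, ContinuousOn (fun t => S t x) (Set.Ici (0 : ℝ)))
    (lam : ℝ) (hlam : 0 < lam)
    (hSbound : ∀ t : ℝ, 0 ≤ t → ‖S t‖ ≤ Real.exp (lam * t))
    (X₀ : H) (a : ℝ → H) (ha : IntegrableOn a (Set.Icc 0 T))
    (X : ℝ → H)
    (hX : ∀ t ∈ Set.Icc (0 : ℝ) T,
      X t = S t X₀ + ∫ s in (0 : ℝ)..t, S (t - s) (a s)) :
    ∀ t ∈ Set.Icc (0 : ℝ) T,
      ‖X t‖ ^ 2 ≤ Real.exp (2 * lam * t) * ‖X₀‖ ^ 2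
        + 2 * ∫ s in (0 : ℝ)..t, Real.exp (2 * lam * (t - s)) * ⟪X s, a s⟫ := by
  -- basic setup
  have hX00 : X 0 = X₀ := by
    rw [hX 0 ⟨le_rfl, hT.le⟩, hS0, intervalIntegral.integral_same]; simp
  -- extended semigroup
  set Sb : ℝ → H →L[ℝ] H := fun h => S (max h 0) with hSbdef
  have hSbeq : ∀ h : ℝ, 0 ≤ h → Sb h = S h := fun h hh => by
    simp only [hSbdef, max_eq_left hh]
  have hSbx : ∀ x : H, Continuous fun h => Sb h x := by
    intro x
    exact (hScont x).comp_continuous (continuous_id.max continuous_const)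
      (fun h => le_max_right h 0)
  have hSbB : ∀ h : ℝ, ‖Sb h‖ ≤ Real.exp (lam * max h 0) :=
    fun h => hSbound _ (le_max_right h 0)
  have hjoint : Continuous fun p : ℝ × H => Sb p.1 p.2 :=
    clm_apply_jointCont Sb hSbx _
      (Real.continuous_exp.comp (continuous_const.mul (continuous_id.max continuous_const)))
      hSbB
  -- measurability of r ↦ Sb (c - r) (a r)
  have hmeasb : ∀ c : ℝ, AEStronglyMeasurable (fun r => Sb (c - r) (a r))
      (volume.restrict (Set.Icc (0:ℝ) T)) := by
    intro c
    exact hjoint.comp_aestronglyMeasurable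
      (((continuous_const.sub continuous_id).aestronglyMeasurable).prodMk ha.aestronglyMeasurable)
  have hmeasS : ∀ (c α β : ℝ), 0 ≤ α → β ≤ T → β ≤ c →
      AEStronglyMeasurable (fun r => S (c - r) (a r)) (volume.restrict (Set.Ioc α β)) := by
    intro c α β h1 h2 h3
    have hsub : Set.Ioc α β ⊆ Set.Icc (0:ℝ) T := fun r hr => ⟨h1.trans hr.1.le, hr.2.trans h2⟩
    have hm : AEStronglyMeasurable (fun r => Sb (c - r) (a r)) (volume.restrict (Set.Ioc α β)) :=
      (hmeasb c).mono_measure (Measure.restrict_mono hsub le_rfl)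
    refine hm.congr ?_
    rw [Filter.EventuallyEq, ae_restrict_iff' measurableSet_Ioc]
    exact Filter.Eventually.of_forall fun r hr => by
      rw [hSbeq (c - r) (by linarith [hr.2])]
  have hIntS : ∀ (c α β : ℝ), 0 ≤ α → α ≤ β → β ≤ T → β ≤ c → 0 ≤ c →
      IntegrableOn (fun r => S (c - r) (a r)) (Set.Ioc α β) := by
    intro c α β h1 h2 h3 h4 h5
    have hsub : Set.Ioc α β ⊆ Set.Icc (0:ℝ) T := fun r hr => ⟨h1.trans hr.1.le, hr.2.trans h3⟩
    refine Integrable.mono (IntegrableOn.mono_set (ha.norm.const_mul (Real.exp (lam * c))) hsub)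
      (hmeasS c α β h1 h3 h4) ?_
    rw [ae_restrict_iff' measurableSet_Ioc]
    refine Filter.Eventually.of_forall fun r hr => ?_
    have hb1 : ‖S (c - r) (a r)‖ ≤ Real.exp (lam * (c - r)) * ‖a r‖ :=
      ((S (c - r)).le_opNorm _).trans
        (mul_le_mul_of_nonneg_right (hSbound _ (by linarith [hr.2])) (norm_nonneg _))
    have hb2 : Real.exp (lam * (c - r)) ≤ Real.exp (lam * c) := by
      apply Real.exp_le_exp.2
      nlinarith [hr.1, h1]
    calc ‖S (c - r) (a r)‖ ≤ Real.exp (lam * c) * ‖a r‖ :=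
          hb1.trans (mul_le_mul_of_nonneg_right hb2 (norm_nonneg _))
      _ ≤ ‖Real.exp (lam * c) * ‖a r‖‖ := le_abs_self _
  have hII : ∀ (c α β : ℝ), 0 ≤ α → α ≤ β → β ≤ T → β ≤ c → 0 ≤ c →
      IntervalIntegrable (fun r => S (c - r) (a r)) volume α β := by
    intro c α β h1 h2 h3 h4 h5
    rw [intervalIntegrable_iff, Set.uIoc_of_le h2]
    exact hIntS c α β h1 h2 h3 h4 h5
  -- flow property
  have hflow : ∀ s t' : ℝ, 0 ≤ s → s ≤ t' → t' ≤ T →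
      X t' = S (t' - s) (X s) + ∫ r in s..t', S (t' - r) (a r) := by
    intro s t' hs hst' ht'T
    have hsT : s ≤ T := hst'.trans ht'T
    have ht'0 : (0:ℝ) ≤ t' := hs.trans hst'
    rw [hX t' ⟨ht'0, ht'T⟩, hX s ⟨hs, hsT⟩, map_add]
    have e1 : S (t' - s) (S s X₀) = S t' X₀ := by
      have h := hSadd (t' - s) s (by linarith) hs
      rw [show t' - s + s = t' by ring] at h
      rw [h]; rfl
    have e2 : S (t' - s) (∫ r in (0:ℝ)..s, S (s - r) (a r))
        = ∫ r in (0:ℝ)..s, S (t' - r) (a r) := by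
      rw [← ContinuousLinearMap.intervalIntegral_comp_comm _ (hII s 0 s le_rfl hs hsT le_rfl hs)]
      apply intervalIntegral.integral_congr
      intro r hr
      rw [Set.uIcc_of_le hs] at hr
      have h := hSadd (t' - s) (s - r) (by linarith) (by linarith [hr.2])
      rw [show t' - s + (s - r) = t' - r by ring] at h
      simp only [h, ContinuousLinearMap.comp_apply]
    rw [e1, e2, add_assoc,
      intervalIntegral.integral_add_adjacent_intervals
        (hII t' 0 s le_rfl hs hsT hst' ht'0) (hII t' s t' hs hst' ht'T le_rfl ht'0)]
  -- one-step energy inequality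
  have hstep : ∀ s t' : ℝ, 0 ≤ s → s ≤ t' → t' ≤ T →
      ‖X t'‖ ^ 2 ≤ Real.exp (2 * lam * (t' - s)) * ‖X s‖ ^ 2
        + 2 * ⟪X t', ∫ r in s..t', S (t' - r) (a r)⟫ := by
    intro s t' hs hst' ht'T
    set J := ∫ r in s..t', S (t' - r) (a r) with hJ
    have hfl := hflow s t' hs hst' ht'T
    have hv : X t' - J = S (t' - s) (X s) := by rw [hfl]; abel
    have hexp : ‖X t'‖ ^ 2 = ‖X t' - J‖ ^ 2 + 2 * ⟪X t', J⟫ - ‖J‖ ^ 2 := by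
      have h1 : ‖X t'‖ ^ 2 = ‖(X t' - J) + J‖ ^ 2 := by rw [sub_add_cancel]
      rw [h1, norm_add_sq_real, inner_sub_left, real_inner_self_eq_norm_sq]
      ring
    have hvb : ‖X t' - J‖ ^ 2 ≤ Real.exp (2 * lam * (t' - s)) * ‖X s‖ ^ 2 := by
      rw [hv]
      have h1 : ‖S (t' - s) (X s)‖ ≤ Real.exp (lam * (t' - s)) * ‖X s‖ :=
        ((S _).le_opNorm _).trans
          (mul_le_mul_of_nonneg_right (hSbound _ (by linarith)) (norm_nonneg _))
      calc ‖S (t' - s) (X s)‖ ^ 2 ≤ (Real.exp (lam * (t' - s)) * ‖X s‖) ^ 2 :=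
            pow_le_pow_left₀ (norm_nonneg _) h1 2
        _ = Real.exp (2 * lam * (t' - s)) * ‖X s‖ ^ 2 := by
            rw [mul_pow, sq (Real.exp _), ← Real.exp_add]; ring_nf
    nlinarith [sq_nonneg ‖J‖]
  -- uniform bound on X
  obtain ⟨M, hM0, hXb⟩ : ∃ M : ℝ, 0 ≤ M ∧ ∀ r : ℝ, 0 ≤ r → r ≤ T → ‖X r‖ ≤ M := by
    set A := ∫ s in Set.Icc (0:ℝ) T, ‖a s‖ with hA
    have hA0 : 0 ≤ A := setIntegral_nonneg measurableSet_Icc fun s _ => norm_nonneg _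
    refine ⟨Real.exp (lam * T) * ‖X₀‖ + Real.exp (lam * T) * A,
      by positivity, fun r hr hrT => ?_⟩
    rw [hX r ⟨hr, hrT⟩]
    refine (norm_add_le _ _).trans (add_le_add ?_ ?_)
    · refine ((S r).le_opNorm _).trans (mul_le_mul_of_nonneg_right
        ((hSbound r hr).trans (Real.exp_le_exp.2 (by nlinarith))) (norm_nonneg _))
    · have h1 : ‖∫ u in (0:ℝ)..r, S (r - u) (a u)‖
          ≤ ∫ u in (0:ℝ)..r, ‖S (r - u) (a u)‖ :=
        intervalIntegral.norm_integral_le_integral_norm hr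
      have h2 : (∫ u in (0:ℝ)..r, ‖S (r - u) (a u)‖)
          = ∫ u in Set.Ioc (0:ℝ) r, ‖S (r - u) (a u)‖ :=
        intervalIntegral.integral_of_le hr
      have h3 : (∫ u in Set.Ioc (0:ℝ) r, ‖S (r - u) (a u)‖)
          ≤ ∫ u in Set.Ioc (0:ℝ) r, Real.exp (lam * T) * ‖a u‖ := by
        refine setIntegral_mono_on
          ((hIntS r 0 r le_rfl hr hrT le_rfl hr).norm)
          ((IntegrableOn.mono_set (ha.norm.const_mul _))
            (Set.Ioc_subset_Icc_self.trans (Set.Icc_subset_Icc le_rfl hrT)))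
          measurableSet_Ioc (fun u hu => ?_)
        refine ((S _).le_opNorm _).trans (mul_le_mul_of_nonneg_right
          ((hSbound _ (by linarith [hu.2])).trans (Real.exp_le_exp.2 (by nlinarith [hu.1, hu.2]))) (norm_nonneg _))
      have h4 : (∫ u in Set.Ioc (0:ℝ) r, Real.exp (lam * T) * ‖a u‖)
          = Real.exp (lam * T) * ∫ u in Set.Ioc (0:ℝ) r, ‖a u‖ := by
        rw [integral_const_mul]
      have h5 : (∫ u in Set.Ioc (0:ℝ) r, ‖a u‖) ≤ A := by
        refine setIntegral_mono_set ha.norm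
          (Filter.Eventually.of_forall fun s => norm_nonneg _) ?_
        exact HasSubset.Subset.eventuallyLE
          (fun s hs => ⟨hs.1.le, hs.2.trans hrT⟩)
      calc ‖∫ u in (0:ℝ)..r, S (r - u) (a u)‖
          ≤ Real.exp (lam * T) * ∫ u in Set.Ioc (0:ℝ) r, ‖a u‖ := by
            rw [← h4]; exact h1.trans (le_of_eq h2 |>.trans h3)
        _ ≤ Real.exp (lam * T) * A :=
            mul_le_mul_of_nonneg_left h5 (Real.exp_pos _).le
  -- main argument
  intro t ht
  obtain ⟨ht0, htT⟩ := ht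
  rcases eq_or_lt_of_le ht0 with h0 | h0
  · simp [← h0, hX00]
  -- the case t = 0 was handled; now 0 < t
  -- opaque grid functions
  obtain ⟨u, hu⟩ : ∃ u : ℕ → ℝ → ℝ, ∀ (n : ℕ) (r : ℝ),
      u n r = ((⌈r * n / t⌉ : ℤ) : ℝ) * (t / n) := ⟨_, fun n r => rfl⟩
  obtain ⟨F, hF⟩ : ∃ F : ℕ → ℝ → ℝ, ∀ (n : ℕ) (r : ℝ), F n r
      = Real.exp (2*lam*(t - u n r)) * ⟪X (u n r), S (u n r - r) (a r)⟫ :=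
    ⟨_, fun n r => rfl⟩
  -- strong continuity along nonnegative sequences tending to 0
  have hStend : ∀ (x : H) (v : ℕ → ℝ), (∀ n, 0 ≤ v n) →
      Filter.Tendsto v Filter.atTop (nhds 0) →
      Filter.Tendsto (fun n => S (v n) x) Filter.atTop (nhds x) := by
    intro x v hv0 hv
    have h := ((hSbx x).tendsto 0).comp hv
    have h0' : Sb 0 x = x := by rw [hSbeq 0 le_rfl, hS0]; rfl
    rw [Function.comp_def] at h
    rw [h0'] at h
    exact h.congr fun n => by rw [hSbeq _ (hv0 n)]
  -- the grid identity
  have hun_eq : ∀ n : ℕ, 0 < n → ∀ (k : ℕ) (r : ℝ),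
      (k:ℝ)*(t/(n:ℝ)) < r → r ≤ ((k:ℝ)+1)*(t/(n:ℝ)) → u n r = ((k:ℝ)+1)*(t/(n:ℝ)) := by
    intro n hn k r h1 h2
    have hn0 : (0:ℝ) < n := Nat.cast_pos.2 hn
    have hd0 : (0:ℝ) < t/(n:ℝ) := div_pos h0 hn0
    have hrd : r * n / t = r / (t/(n:ℝ)) := by field_simp
    have hceil : ⌈r * n / t⌉ = ((k:ℤ)+1) := by
      rw [Int.ceil_eq_iff, hrd]
      constructor
      · push_cast
        rw [lt_div_iff₀ hd0]
        nlinarith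
      · push_cast
        rw [div_le_iff₀ hd0]
        nlinarith
    rw [hu, hceil]
    push_cast
    ring
  -- integrability of F n on the grid pieces
  have hFpiece : ∀ n : ℕ, 0 < n → ∀ k : ℕ, k < n →
      IntegrableOn (F n) (Set.Ioc ((k:ℝ)*(t/(n:ℝ))) (((k:ℝ)+1)*(t/(n:ℝ)))) := by
    intro n hn k hk
    have hn0 : (0:ℝ) < n := Nat.cast_pos.2 hn
    have hd0 : (0:ℝ) < t/(n:ℝ) := div_pos h0 hn0
    have hk1 : ((k:ℝ)+1) ≤ (n:ℝ) := by exact_mod_cast hk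
    have h0k : (0:ℝ) ≤ (k:ℝ)*(t/(n:ℝ)) := by positivity
    have hkk : (k:ℝ)*(t/(n:ℝ)) ≤ ((k:ℝ)+1)*(t/(n:ℝ)) := by nlinarith
    have hk1t : ((k:ℝ)+1)*(t/(n:ℝ)) ≤ t := by
      calc ((k:ℝ)+1)*(t/(n:ℝ)) ≤ (n:ℝ)*(t/(n:ℝ)) := by nlinarith
        _ = t := by field_simp
    have hk1T : ((k:ℝ)+1)*(t/(n:ℝ)) ≤ T := hk1t.trans htT
    have hInt := hIntS (((k:ℝ)+1)*(t/(n:ℝ))) ((k:ℝ)*(t/(n:ℝ))) (((k:ℝ)+1)*(t/(n:ℝ)))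
      h0k hkk hk1T le_rfl (h0k.trans hkk)
    have hnice : IntegrableOn (fun r => Real.exp (2*lam*(t - ((k:ℝ)+1)*(t/(n:ℝ)))) *
        ⟪X (((k:ℝ)+1)*(t/(n:ℝ))), S ((((k:ℝ)+1)*(t/(n:ℝ))) - r) (a r)⟫)
        (Set.Ioc ((k:ℝ)*(t/(n:ℝ))) (((k:ℝ)+1)*(t/(n:ℝ)))) :=
      ((ContinuousLinearMap.integrable_comp (innerSL ℝ (X (((k:ℝ)+1)*(t/(n:ℝ))))) hInt).const_mul _)
    refine hnice.congr ?_
    rw [Filter.EventuallyEq, ae_restrict_iff' measurableSet_Ioc]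
    refine Filter.Eventually.of_forall fun r hr => ?_
    rw [hF, hun_eq n hn k r hr.1 hr.2]
  -- measurability of F n on (0, t]
  have hFmeas : ∀ n : ℕ, 0 < n →
      AEStronglyMeasurable (F n) (volume.restrict (Set.Ioc (0:ℝ) t)) := by
    intro n hn
    have hn0 : (0:ℝ) < n := Nat.cast_pos.2 hn
    have hd0 : (0:ℝ) < t/(n:ℝ) := div_pos h0 hn0
    have haux : ∀ m : ℕ, m ≤ n → AEStronglyMeasurable (F n)
        (volume.restrict (Set.Ioc (0:ℝ) ((m:ℝ)*(t/(n:ℝ))))) := by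
      intro m
      induction m with
      | zero =>
        intro _
        simp only [Nat.cast_zero, zero_mul, Set.Ioc_self, Measure.restrict_empty]
        exact aestronglyMeasurable_zero_measure _
      | succ m ih =>
        intro hm1
        have hm : m ≤ n := (Nat.le_succ m).trans hm1
        have h1 : (0:ℝ) ≤ (m:ℝ)*(t/(n:ℝ)) := by positivity
        have h2 : (m:ℝ)*(t/(n:ℝ)) ≤ ((m:ℝ)+1)*(t/(n:ℝ)) := by nlinarith
        have hunion : Set.Ioc (0:ℝ) (((m:ℝ)+1)*(t/(n:ℝ)))
            = Set.Ioc (0:ℝ) ((m:ℝ)*(t/(n:ℝ)))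
              ∪ Set.Ioc ((m:ℝ)*(t/(n:ℝ))) (((m:ℝ)+1)*(t/(n:ℝ))) :=
          (Set.Ioc_union_Ioc_eq_Ioc h1 h2).symm
        rw [show ((m+1:ℕ):ℝ) = (m:ℝ)+1 by push_cast; ring, hunion,
          aestronglyMeasurable_union_iff]
        exact ⟨ih hm, (hFpiece n hn m hm1).aestronglyMeasurable⟩
    have h := haux n le_rfl
    rwa [show ((n:ℝ))*(t/(n:ℝ)) = t by field_simp] at h
  -- the key discretized inequality
  have hkey : ∀ n : ℕ, 0 < n → ‖X t‖^2 ≤ Real.exp (2*lam*t)*‖X₀‖^2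
      + 2 * ∫ r in Set.Ioc (0:ℝ) t, F n r := by
    intro n hn
    obtain ⟨d, hd⟩ : ∃ d : ℝ, d = t / n := ⟨_, rfl⟩
    have hn0 : (0:ℝ) < n := Nat.cast_pos.2 hn
    have hd0 : 0 < d := by rw [hd]; exact div_pos h0 hn0
    have hnd : (n:ℝ) * d = t := by rw [hd]; field_simp
    have hun_eq : ∀ (k : ℕ) (r : ℝ), (k:ℝ)*d < r → r ≤ ((k:ℝ)+1)*d → u n r = ((k:ℝ)+1)*d := by
      intro k r h1 h2
      have hrd : r * n / t = r / d := by rw [hd]; field_simp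
      have hceil : ⌈r * n / t⌉ = ((k:ℤ)+1) := by
        rw [Int.ceil_eq_iff, hrd]
        constructor
        · push_cast
          rw [lt_div_iff₀ hd0]
          nlinarith
        · push_cast
          rw [div_le_iff₀ hd0]
          nlinarith
      rw [hu, hceil, ← hd]
      push_cast
      ring
    -- telescoping
    have tele : ∀ m : ℕ, m ≤ n →
        Real.exp (2*lam*(t - (m:ℝ)*d)) * ‖X ((m:ℝ)*d)‖^2
          ≤ Real.exp (2*lam*t) * ‖X₀‖^2
            + 2 * ∑ k ∈ Finset.range m, Real.exp (2*lam*(t - ((k:ℝ)+1)*d)) *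
                ⟪X (((k:ℝ)+1)*d),
                  ∫ r in ((k:ℝ)*d)..(((k:ℝ)+1)*d), S ((((k:ℝ)+1)*d) - r) (a r)⟫ := by
      intro m
      induction m with
      | zero => intro _; simp [hX00]
      | succ m ih =>
        intro hm1
        have hm : m ≤ n := (Nat.le_succ m).trans hm1
        have ih' := ih hm
        have h0m : (0:ℝ) ≤ (m:ℝ)*d := by positivity
        have hmd : (m:ℝ)*d ≤ ((m:ℝ)+1)*d := by nlinarith
        have hm1t : ((m:ℝ)+1)*d ≤ t := by
          rw [← hnd]
          have : ((m:ℝ)+1) ≤ (n:ℝ) := by exact_mod_cast hm1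
          nlinarith
        have hm1T : ((m:ℝ)+1)*d ≤ T := hm1t.trans htT
        have hstepm := hstep ((m:ℝ)*d) (((m:ℝ)+1)*d) h0m hmd hm1T
        have hc0 : (0:ℝ) < Real.exp (2*lam*(t - ((m:ℝ)+1)*d)) := Real.exp_pos _
        have hmain : Real.exp (2*lam*(t - ((m:ℝ)+1)*d)) * ‖X (((m:ℝ)+1)*d)‖^2
            ≤ Real.exp (2*lam*(t - (m:ℝ)*d)) * ‖X ((m:ℝ)*d)‖^2
              + 2 * (Real.exp (2*lam*(t - ((m:ℝ)+1)*d)) *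
                ⟪X (((m:ℝ)+1)*d),
                  ∫ r in ((m:ℝ)*d)..(((m:ℝ)+1)*d), S ((((m:ℝ)+1)*d) - r) (a r)⟫) := by
          have h2 : Real.exp (2*lam*(t - ((m:ℝ)+1)*d)) * Real.exp (2*lam*(((m:ℝ)+1)*d - (m:ℝ)*d))
              = Real.exp (2*lam*(t - (m:ℝ)*d)) := by
            rw [← Real.exp_add]; ring_nf
          calc Real.exp (2*lam*(t - ((m:ℝ)+1)*d)) * ‖X (((m:ℝ)+1)*d)‖^2
              ≤ Real.exp (2*lam*(t - ((m:ℝ)+1)*d)) *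
                (Real.exp (2*lam*(((m:ℝ)+1)*d - (m:ℝ)*d)) * ‖X ((m:ℝ)*d)‖^2
                  + 2 * ⟪X (((m:ℝ)+1)*d),
                      ∫ r in ((m:ℝ)*d)..(((m:ℝ)+1)*d), S ((((m:ℝ)+1)*d) - r) (a r)⟫) :=
                mul_le_mul_of_nonneg_left hstepm hc0.le
            _ = _ := by rw [mul_add, ← mul_assoc, h2]; ring
        push_cast
        push_cast at ih'
        rw [Finset.sum_range_succ]
        push_cast
        linarith [hmain, ih']
    have telen := tele n le_rfl
    rw [hnd] at telen
    simp only [sub_self, mul_zero, Real.exp_zero, one_mul] at telen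
    -- convert each term
    have hterm : ∀ k ∈ Finset.range n,
        Real.exp (2*lam*(t - ((k:ℝ)+1)*d)) *
          ⟪X (((k:ℝ)+1)*d), ∫ r in ((k:ℝ)*d)..(((k:ℝ)+1)*d), S ((((k:ℝ)+1)*d) - r) (a r)⟫
        = ∫ r in Set.Ioc ((k:ℝ)*d) (((k:ℝ)+1)*d), F n r := by
      intro k hk
      rw [Finset.mem_range] at hk
      have hk1 : ((k:ℝ)+1) ≤ (n:ℝ) := by exact_mod_cast hk
      have h0k : (0:ℝ) ≤ (k:ℝ)*d := by positivity
      have hkk : (k:ℝ)*d ≤ ((k:ℝ)+1)*d := by nlinarith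
      have hk1t : ((k:ℝ)+1)*d ≤ t := by rw [← hnd]; nlinarith
      have hk1T : ((k:ℝ)+1)*d ≤ T := hk1t.trans htT
      have hInt := hIntS (((k:ℝ)+1)*d) ((k:ℝ)*d) (((k:ℝ)+1)*d) h0k hkk hk1T le_rfl
        (h0k.trans hkk)
      rw [intervalIntegral.integral_of_le hkk, ← integral_inner hInt, ← integral_const_mul]
      refine (setIntegral_congr_fun measurableSet_Ioc (fun r hr => ?_)).symm
      rw [hF, hun_eq k r hr.1 hr.2]
    -- integrability of F n on each piece
    have hFnI : ∀ k : ℕ, k < n → IntegrableOn (F n) (Set.Ioc ((k:ℝ)*d) (((k:ℝ)+1)*d)) := by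
      intro k hk
      have hk1 : ((k:ℝ)+1) ≤ (n:ℝ) := by exact_mod_cast hk
      have h0k : (0:ℝ) ≤ (k:ℝ)*d := by positivity
      have hkk : (k:ℝ)*d ≤ ((k:ℝ)+1)*d := by nlinarith
      have hk1t : ((k:ℝ)+1)*d ≤ t := by rw [← hnd]; nlinarith
      have hk1T : ((k:ℝ)+1)*d ≤ T := hk1t.trans htT
      have hInt := hIntS (((k:ℝ)+1)*d) ((k:ℝ)*d) (((k:ℝ)+1)*d) h0k hkk hk1T le_rfl
        (h0k.trans hkk)
      have hnice : IntegrableOn (fun r => Real.exp (2*lam*(t - ((k:ℝ)+1)*d)) *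
          ⟪X (((k:ℝ)+1)*d), S ((((k:ℝ)+1)*d) - r) (a r)⟫)
          (Set.Ioc ((k:ℝ)*d) (((k:ℝ)+1)*d)) :=
        ((ContinuousLinearMap.integrable_comp (innerSL ℝ (X (((k:ℝ)+1)*d))) hInt).const_mul _)
      refine hnice.congr ?_
      rw [Filter.EventuallyEq, ae_restrict_iff' measurableSet_Ioc]
      refine Filter.Eventually.of_forall fun r hr => ?_
      rw [hF, hun_eq k r hr.1 hr.2]
    -- sum of the pieces
    have hintk : ∀ k < n, IntervalIntegrable (F n) volume
        ((fun k : ℕ => (k:ℝ)*d) k) ((fun k : ℕ => (k:ℝ)*d) (k+1)) := by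
      intro k hk
      simp only
      have hkk : (k:ℝ)*d ≤ ((k:ℝ)+1)*d := by nlinarith [Nat.cast_nonneg (α := ℝ) k]
      rw [show ((k+1 : ℕ):ℝ) = ((k:ℝ)+1) by push_cast; ring, intervalIntegrable_iff,
        Set.uIoc_of_le hkk]
      exact hFnI k hk
    have hadj := intervalIntegral.sum_integral_adjacent_intervals (μ := volume) hintk
    have h₀d : ((0:ℕ):ℝ)*d = 0 := by simp
    rw [h₀d, hnd] at hadj
    have hsum : ∑ k ∈ Finset.range n, ∫ r in Set.Ioc ((k:ℝ)*d) (((k:ℝ)+1)*d), F n r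
        = ∫ r in Set.Ioc (0:ℝ) t, F n r := by
      rw [← intervalIntegral.integral_of_le h0.le, ← hadj]
      refine Finset.sum_congr rfl fun k hk => ?_
      rw [Finset.mem_range] at hk
      have hkk : (k:ℝ)*d ≤ ((k:ℝ)+1)*d := by nlinarith [Nat.cast_nonneg (α := ℝ) k]
      rw [show ((k+1 : ℕ):ℝ) = ((k:ℝ)+1) by push_cast; ring]
      exact (intervalIntegral.integral_of_le hkk).symm
    calc ‖X t‖^2 ≤ Real.exp (2*lam*t) * ‖X₀‖^2
        + 2 * ∑ k ∈ Finset.range n, Real.exp (2*lam*(t - ((k:ℝ)+1)*d)) *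
            ⟪X (((k:ℝ)+1)*d),
              ∫ r in ((k:ℝ)*d)..(((k:ℝ)+1)*d), S ((((k:ℝ)+1)*d) - r) (a r)⟫ := telen
      _ = Real.exp (2*lam*t) * ‖X₀‖^2 + 2 * ∫ r in Set.Ioc (0:ℝ) t, F n r := by
          rw [Finset.sum_congr rfl hterm, hsum]
  -- pass to the limit
  -- properties of u n r
  have hu_mem : ∀ n : ℕ, 0 < n → ∀ r ∈ Set.Ioc (0:ℝ) t,
      r ≤ u n r ∧ u n r ≤ t ∧ u n r < r + t / n := by
    intro n hn r hr
    have hn0 : (0:ℝ) < n := Nat.cast_pos.2 hn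
    have hd0 : (0:ℝ) < t / n := div_pos h0 hn0
    have hx1 : r * n / t ≤ ⌈r * n / t⌉ := Int.le_ceil _
    have hx2 : (⌈r * n / t⌉ : ℝ) < r * n / t + 1 := Int.ceil_lt_add_one _
    have hx3 : ⌈r * n / t⌉ ≤ (n : ℤ) := by
      apply Int.ceil_le.2
      push_cast
      rw [div_le_iff₀ h0]
      nlinarith [hr.2]
    refine ⟨?_, ?_, ?_⟩
    · rw [hu]
      calc r = (r * n / t) * (t / n) := by field_simp
        _ ≤ (⌈r * n / t⌉ : ℝ) * (t / n) := mul_le_mul_of_nonneg_right hx1 hd0.le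
    · rw [hu]
      calc ((⌈r * n / t⌉ : ℤ) : ℝ) * (t / n) ≤ (n : ℝ) * (t / n) := by
            have h5 : ((⌈r * n / t⌉ : ℤ) : ℝ) ≤ (n : ℝ) := by exact_mod_cast hx3
            exact mul_le_mul_of_nonneg_right h5 hd0.le
        _ = t := by field_simp
    · rw [hu]
      calc ((⌈r * n / t⌉ : ℤ) : ℝ) * (t / n) < (r * n / t + 1) * (t / n) :=
            mul_lt_mul_of_pos_right hx2 hd0
        _ = r + t / n := by field_simp
  -- uniform bound for F n
  have hbound : ∀ n : ℕ, 0 < n → ∀ r ∈ Set.Ioc (0:ℝ) t,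
      ‖F n r‖ ≤ Real.exp (2*lam*t) * M * Real.exp (lam*t) * ‖a r‖ := by
    intro n hn r hr
    obtain ⟨hru, hut, -⟩ := hu_mem n hn r hr
    have hu0 : 0 ≤ u n r := hr.1.le.trans hru
    have h1 : ‖F n r‖ = Real.exp (2*lam*(t - u n r)) * |⟪X (u n r), S (u n r - r) (a r)⟫| := by
      rw [hF, Real.norm_eq_abs, abs_mul, abs_of_pos (Real.exp_pos _)]
    rw [h1]
    have h2 : |⟪X (u n r), S (u n r - r) (a r)⟫| ≤ M * (Real.exp (lam*t) * ‖a r‖) := by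
      refine (abs_real_inner_le_norm _ _).trans ?_
      have hX' : ‖X (u n r)‖ ≤ M := hXb _ hu0 (hut.trans htT)
      have hS' : ‖S (u n r - r) (a r)‖ ≤ Real.exp (lam*t) * ‖a r‖ := by
        refine ((S _).le_opNorm _).trans (mul_le_mul_of_nonneg_right
          ((hSbound _ (by linarith [hr.1])).trans (Real.exp_le_exp.2 ?_)) (norm_nonneg _))
        have h6 : u n r - r ≤ t := by linarith [hr.1]
        nlinarith
      exact mul_le_mul hX' hS' (norm_nonneg _) hM0
    have h3 : Real.exp (2*lam*(t - u n r)) ≤ Real.exp (2*lam*t) := by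
      apply Real.exp_le_exp.2; nlinarith
    calc Real.exp (2*lam*(t - u n r)) * |⟪X (u n r), S (u n r - r) (a r)⟫|
        ≤ Real.exp (2*lam*t) * (M * (Real.exp (lam*t) * ‖a r‖)) :=
          mul_le_mul h3 h2 (abs_nonneg _) (Real.exp_pos _).le
      _ = Real.exp (2*lam*t) * M * Real.exp (lam*t) * ‖a r‖ := by ring
  -- pointwise convergence
  have hlim : ∀ r ∈ Set.Ioc (0:ℝ) t, Tendsto (fun n : ℕ => F (n+1) r) atTop
      (nhds (Real.exp (2*lam*(t-r)) * ⟪X r, a r⟫)) := by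
    intro r hr
    have hrm := fun n : ℕ => hu_mem (n+1) n.succ_pos r hr
    have hdn : Tendsto (fun n : ℕ => t / ((n+1 : ℕ) : ℝ)) atTop (nhds 0) := by
      have h := (tendsto_one_div_add_atTop_nhds_zero_nat (𝕜 := ℝ))
      have h2 := h.const_mul t
      rw [mul_zero] at h2
      refine h2.congr fun n => ?_
      push_cast
      ring
    have hup : Tendsto (fun n : ℕ => r + t / ((n+1 : ℕ) : ℝ)) atTop (nhds r) := by
      have h2 := (tendsto_const_nhds : Tendsto (fun _ : ℕ => r) atTop (nhds r)).add hdn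
      rwa [add_zero] at h2
    have hut : Tendsto (fun n : ℕ => u (n+1) r) atTop (nhds r) :=
      tendsto_of_tendsto_of_tendsto_of_le_of_le tendsto_const_nhds hup
        (fun n => (hrm n).1) (fun n => ((hrm n).2.2).le)
    have hq : Tendsto (fun n : ℕ => u (n+1) r - r) atTop (nhds 0) := by
      have h2 := hut.sub_const r
      rwa [sub_self] at h2
    have hq0 : ∀ n : ℕ, 0 ≤ u (n+1) r - r := fun n => sub_nonneg.2 (hrm n).1
    have hSx : ∀ x : H, Tendsto (fun n : ℕ => S (u (n+1) r - r) x) atTop (nhds x) :=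
      fun x => hStend x _ hq0 hq
    have hdecomp : ∀ n : ℕ, F (n+1) r = Real.exp (2*lam*(t - u (n+1) r)) *
        (⟪S (u (n+1) r - r) (X r), S (u (n+1) r - r) (a r)⟫
          + ⟪∫ s' in r..(u (n+1) r), S (u (n+1) r - s') (a s'), S (u (n+1) r - r) (a r)⟫) := by
      intro n
      rw [hF, hflow r (u (n+1) r) hr.1.le (hrm n).1 ((hrm n).2.1.trans htT), inner_add_left]
    -- the error term tends to zero
    have hγlim : Tendsto (fun n : ℕ => ∫ s in Set.Icc (0:ℝ) T,
        (Set.Ioc r (r + t / ((n+1 : ℕ) : ℝ))).indicator (fun s' => ‖a s'‖) s)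
        atTop (nhds 0) := by
      have hc := tendsto_integral_of_dominated_convergence (μ := volume.restrict (Set.Icc (0:ℝ) T))
        (F := fun (n : ℕ) s => (Set.Ioc r (r + t / ((n+1 : ℕ) : ℝ))).indicator (fun s' => ‖a s'‖) s)
        (f := fun _ => (0:ℝ)) (bound := fun s => ‖a s‖)
        (fun n => (ha.norm.aestronglyMeasurable).indicator measurableSet_Ioc) ha.norm
        (fun n => Filter.Eventually.of_forall fun s => by
          refine (norm_indicator_le_norm_self _ _).trans ?_
          rw [norm_norm])
        (Filter.Eventually.of_forall fun s => by
          by_cases hs : r < s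
          · have hev : ∀ᶠ n : ℕ in atTop, r + t / ((n+1 : ℕ) : ℝ) < s := hup.eventually_lt_const hs
            refine Tendsto.congr' ?_ tendsto_const_nhds
            filter_upwards [hev] with n hn
            exact (Set.indicator_of_notMem (fun hmem => absurd hmem.2 (not_le.2 hn)) _).symm
          · refine Tendsto.congr' ?_ tendsto_const_nhds
            refine Filter.Eventually.of_forall fun n => ?_
            exact (Set.indicator_of_notMem (fun hmem => hs hmem.1) _).symm)
      simpa using hc
    have hJ : Tendsto (fun n : ℕ => ∫ s' in r..(u (n+1) r), S (u (n+1) r - s') (a s'))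
        atTop (nhds 0) := by
      refine squeeze_zero_norm (a := fun n : ℕ => Real.exp (lam*T) * ∫ s in Set.Icc (0:ℝ) T,
        (Set.Ioc r (r + t / ((n+1 : ℕ) : ℝ))).indicator (fun s' => ‖a s'‖) s) (fun n => ?_) ?_
      case refine_2 =>
        have h2 := hγlim.const_mul (Real.exp (lam*T))
        rwa [mul_zero] at h2
      -- the norm bound
      obtain ⟨hru, hut', hulst⟩ := hrm n
      have hu0 : (0:ℝ) ≤ u (n+1) r := hr.1.le.trans hru
      have hsub : Set.Ioc r (u (n+1) r) ⊆ Set.Icc (0:ℝ) T :=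
        fun s hs => ⟨hr.1.le.trans hs.1.le, hs.2.trans (hut'.trans htT)⟩
      have hb1 : ‖∫ s' in r..(u (n+1) r), S (u (n+1) r - s') (a s')‖
          ≤ ∫ s' in r..(u (n+1) r), ‖S (u (n+1) r - s') (a s')‖ :=
        intervalIntegral.norm_integral_le_integral_norm hru
      have hb1' : ‖∫ s' in r..(u (n+1) r), S (u (n+1) r - s') (a s')‖
          ≤ ∫ s' in Set.Ioc r (u (n+1) r), ‖S (u (n+1) r - s') (a s')‖ :=
        hb1.trans_eq (intervalIntegral.integral_of_le hru)
      have hb2 : (∫ s' in Set.Ioc r (u (n+1) r), ‖S (u (n+1) r - s') (a s')‖)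
          ≤ ∫ s' in Set.Ioc r (u (n+1) r), Real.exp (lam*T) * ‖a s'‖ := by
        refine setIntegral_mono_on
          ((hIntS (u (n+1) r) r (u (n+1) r) hr.1.le hru (hut'.trans htT) le_rfl hu0).norm)
          (IntegrableOn.mono_set (ha.norm.const_mul _) hsub)
          measurableSet_Ioc (fun s hs => ?_)
        refine ((S _).le_opNorm _).trans (mul_le_mul_of_nonneg_right
          ((hSbound _ (by linarith [hs.2])).trans (Real.exp_le_exp.2 ?_)) (norm_nonneg _))
        have : u (n+1) r - s ≤ T := by
          have := hs.1
          have := hut'.trans htT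
          linarith [hr.1]
        nlinarith
      have hb3 : (∫ s' in Set.Ioc r (u (n+1) r), Real.exp (lam*T) * ‖a s'‖)
          = Real.exp (lam*T) * ∫ s' in Set.Ioc r (u (n+1) r), ‖a s'‖ := integral_const_mul _ _
      have hb4 : (∫ s' in Set.Ioc r (u (n+1) r), ‖a s'‖)
          ≤ ∫ s in Set.Icc (0:ℝ) T,
              (Set.Ioc r (r + t / ((n+1 : ℕ) : ℝ))).indicator (fun s' => ‖a s'‖) s := by
        have he : (∫ s' in Set.Ioc r (u (n+1) r), ‖a s'‖)
            = ∫ s in Set.Icc (0:ℝ) T,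
                (Set.Ioc r (u (n+1) r)).indicator (fun s' => ‖a s'‖) s := by
          rw [setIntegral_indicator measurableSet_Ioc,
            Set.inter_eq_self_of_subset_right hsub]
        rw [he]
        refine setIntegral_mono_on
          ((ha.norm).indicator measurableSet_Ioc)
          ((ha.norm).indicator measurableSet_Ioc)
          measurableSet_Icc (fun s _ => ?_)
        exact Set.indicator_le_indicator_of_subset
          (Set.Ioc_subset_Ioc le_rfl hulst.le) (fun s' => norm_nonneg _) s
      calc ‖∫ s' in r..(u (n+1) r), S (u (n+1) r - s') (a s')‖
          ≤ Real.exp (lam*T) * ∫ s' in Set.Ioc r (u (n+1) r), ‖a s'‖ := by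
            rw [← hb3]; exact hb1'.trans hb2
        _ ≤ Real.exp (lam*T) * ∫ s in Set.Icc (0:ℝ) T,
              (Set.Ioc r (r + t / ((n+1 : ℕ) : ℝ))).indicator (fun s' => ‖a s'‖) s :=
            mul_le_mul_of_nonneg_left hb4 (Real.exp_pos _).le
    have hJi : Tendsto (fun n : ℕ => ⟪∫ s' in r..(u (n+1) r), S (u (n+1) r - s') (a s'),
        S (u (n+1) r - r) (a r)⟫) atTop (nhds (0:ℝ)) := by
      have h2 := Filter.Tendsto.inner (𝕜 := ℝ) hJ (hSx (a r))
      simpa using h2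
    have hA : Tendsto (fun n : ℕ => ⟪S (u (n+1) r - r) (X r), S (u (n+1) r - r) (a r)⟫)
        atTop (nhds ⟪X r, a r⟫) := Filter.Tendsto.inner (𝕜 := ℝ) (hSx (X r)) (hSx (a r))
    have hE : Tendsto (fun n : ℕ => Real.exp (2*lam*(t - u (n+1) r))) atTop
        (nhds (Real.exp (2*lam*(t - r)))) := by
      have hcont : Continuous fun x : ℝ => Real.exp (2*lam*(t - x)) :=
        Real.continuous_exp.comp (continuous_const.mul (continuous_const.sub continuous_id))
      exact (hcont.tendsto r).comp hut
    have hfin := hE.mul (hA.add hJi)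
    rw [add_zero] at hfin
    exact Tendsto.congr (fun n => (hdecomp n).symm) hfin
  -- dominated convergence
  have hbINT : IntegrableOn (fun r => Real.exp (2*lam*t) * M * Real.exp (lam*t) * ‖a r‖)
      (Set.Ioc (0:ℝ) t) :=
    IntegrableOn.mono_set (ha.norm.const_mul _) (fun r hr => ⟨hr.1.le, hr.2.trans htT⟩)
  have hDCT := tendsto_integral_of_dominated_convergence
    (μ := volume.restrict (Set.Ioc (0:ℝ) t))
    (F := fun (n : ℕ) r => F (n+1) r)
    (f := fun r => Real.exp (2*lam*(t-r)) * ⟪X r, a r⟫)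
    (bound := fun r => Real.exp (2*lam*t) * M * Real.exp (lam*t) * ‖a r‖)
    (fun n => hFmeas (n+1) n.succ_pos) hbINT
    (fun n => (ae_restrict_iff' measurableSet_Ioc).2
      (Filter.Eventually.of_forall fun r hr => hbound (n+1) n.succ_pos r hr))
    ((ae_restrict_iff' measurableSet_Ioc).2
      (Filter.Eventually.of_forall fun r hr => hlim r hr))
  have hineq : ∀ n : ℕ, ‖X t‖^2 ≤ Real.exp (2*lam*t)*‖X₀‖^2
      + 2 * ∫ r in Set.Ioc (0:ℝ) t, F (n+1) r := fun n => hkey (n+1) n.succ_pos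
  have hRHS := (tendsto_const_nhds : Tendsto (fun _ : ℕ => Real.exp (2*lam*t)*‖X₀‖^2)
      atTop (nhds (Real.exp (2*lam*t)*‖X₀‖^2))).add (hDCT.const_mul 2)
  have hfin := ge_of_tendsto' hRHS hineq
  rw [intervalIntegral.integral_of_le h0.le]
  exact hfin
end

section
/- Let zⁿ, z : [0,T] → H be continuous functions with sup_{0≤t≤T} ‖zⁿ(t) − z(t)‖ → 0 as n → ∞. Then for every t ∈ [0,T] and every v ∈ L²([0,t];H), ∫₀ᵗ ⟨ S(t−s)( f(zⁿ(s)) − f(z(s)) ), v(s) ⟩ ds → 0 as n → ∞. (Convergence (3.9) in the proof of Theorem 3.1.) -/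
open MeasureTheory
open scoped RealInnerProductSpace

theorem pettis_measurable {H : Type*} [NormedAddCommGroup H] [InnerProductSpace ℝ H]
    [CompleteSpace H] [TopologicalSpace.SeparableSpace H]
    {α : Type*} [MeasurableSpace α] (g : α → H)
    (h : ∀ y : H, Measurable fun s => ⟪g s, y⟫) : StronglyMeasurable g := by
  obtain ⟨w, b, hb⟩ := exists_hilbertBasis ℝ H
  have horth : Orthonormal ℝ ((↑) : w → H) := by rw [← hb]; exact b.orthonormal
  have hcount : w.Countable := by
    have hdisj : w.PairwiseDisjoint (fun x : H => Metric.ball x (1/2)) := by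
      intro x hx y hy hxy
      apply Metric.ball_disjoint_ball
      have h0 : ⟪x, y⟫ = 0 := by
        have := horth.2 (i := ⟨x, hx⟩) (j := ⟨y, hy⟩) (by simpa using hxy)
        simpa using this
      have h1 : ‖x‖ = 1 := by simpa using horth.1 ⟨x, hx⟩
      have h2 : ‖y‖ = 1 := by simpa using horth.1 ⟨y, hy⟩
      have hsq : ‖x - y‖ ^ 2 = 2 := by
        rw [@norm_sub_sq_real]; rw [h0, h1, h2]; ring
      have : (1 : ℝ) ≤ ‖x - y‖ := by nlinarith [norm_nonneg (x - y)]
      rw [dist_eq_norm]; linarith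
    exact hdisj.countable_of_isOpen (fun i _ => Metric.isOpen_ball)
      (fun i _ => Metric.nonempty_ball.2 (by norm_num))
  haveI := hcount.to_subtype
  have key : ∀ x : α, Filter.Tendsto (fun I : Finset w => ∑ i ∈ I, ⟪(b i : H), g x⟫ • (b i : H))
      Filter.atTop (nhds (g x)) := by
    intro x
    have := b.hasSum_repr (g x)
    simp only [b.repr_apply_apply, hb] at this
    rw [hb]; exact this
  refine stronglyMeasurable_of_tendsto Filter.atTop (fun I => ?_) (tendsto_pi_nhds.2 key)
  refine Finset.stronglyMeasurable_fun_sum _ fun i _ => ?_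
  have hm : Measurable fun s => ⟪(b i : H), g s⟫ := by
    simpa only [real_inner_comm] using h (b i)
  exact hm.stronglyMeasurable.smul_const _

theorem cont_apply_aux {H : Type*} [NormedAddCommGroup H] [InnerProductSpace ℝ H]
    (S' : ℝ → H →L[ℝ] H) (hc : ∀ x, Continuous fun r => S' r x)
    (hb : ∀ r, ‖S' r‖ ≤ 1) : Continuous fun p : ℝ × H => S' p.1 p.2 := by
  rw [continuous_iff_continuousAt]
  rintro ⟨r₀, x₀⟩
  have h1 : Filter.Tendsto (fun p : ℝ × H => S' p.1 (p.2 - x₀)) (nhds (r₀, x₀)) (nhds 0) := by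
    refine squeeze_zero_norm (a := fun p : ℝ × H => ‖p.2 - x₀‖) ?_ ?_
    · intro p
      calc ‖S' p.1 (p.2 - x₀)‖ ≤ ‖S' p.1‖ * ‖p.2 - x₀‖ := (S' p.1).le_opNorm _
        _ ≤ 1 * ‖p.2 - x₀‖ := mul_le_mul_of_nonneg_right (hb _) (norm_nonneg _)
        _ = ‖p.2 - x₀‖ := one_mul _
    · have h2 : Filter.Tendsto (fun p : ℝ × H => p.2 - x₀) (nhds (r₀, x₀)) (nhds (x₀ - x₀)) :=
        ((continuous_snd.sub continuous_const).tendsto _)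
      simpa using h2.norm
  have h2 : Filter.Tendsto (fun p : ℝ × H => S' p.1 x₀) (nhds (r₀, x₀)) (nhds (S' r₀ x₀)) :=
    ((hc x₀).comp continuous_fst).tendsto _
  have h3 := h1.add h2
  rw [zero_add] at h3
  have h4 : ∀ p : ℝ × H, S' p.1 (p.2 - x₀) + S' p.1 x₀ = S' p.1 p.2 := fun p => by
    rw [map_sub, sub_add_cancel]
  unfold ContinuousAt
  exact h3.congr h4

/-- Convergence (3.9) in the proof of Theorem 3.1. -/
theorem weak_convergence_of_nonlinearity
    {H : Type*} [NormedAddCommGroup H] [InnerProductSpace ℝ H] [CompleteSpace H]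
    [TopologicalSpace.SeparableSpace H]
    (T : ℝ) (hT : 0 < T)
    (S : ℝ → H →L[ℝ] H)
    (hS0 : S 0 = ContinuousLinearMap.id ℝ H)
    (hSadd : ∀ s t : ℝ, 0 ≤ s → 0 ≤ t → S (s + t) = (S s).comp (S t))
    (hScont : ∀ x : H, ContinuousOn (fun t => S t x) (Set.Ici (0 : ℝ)))
    (hScontr : ∀ t : ℝ, 0 ≤ t → ‖S t‖ ≤ 1)
    (f : H → H)
    (hf_demi : ∀ (x : ℕ → H) (x₀ : H), Filter.Tendsto x Filter.atTop (nhds x₀) →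
      ∀ y : H, Filter.Tendsto (fun n => ⟪f (x n), y⟫) Filter.atTop (nhds ⟪f x₀, y⟫))
    (C : ℝ) (hC : 0 < C) (m : ℕ)
    (hf_growth : ∀ x : H, ‖f x‖ ≤ C * (1 + ‖x‖ ^ m))
    (z : ℕ → ℝ → H) (z₀ : ℝ → H)
    (hz_cont : ∀ n, ContinuousOn (z n) (Set.Icc 0 T))
    (hz₀_cont : ContinuousOn z₀ (Set.Icc 0 T))
    (hz_conv : TendstoUniformlyOn z z₀ Filter.atTop (Set.Icc (0 : ℝ) T)) :
    ∀ t ∈ Set.Icc (0 : ℝ) T, ∀ v : ℝ → H,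
      MemLp v 2 (volume.restrict (Set.Icc 0 t)) →
      Filter.Tendsto
        (fun n => ∫ s in (0 : ℝ)..t, ⟪S (t - s) (f (z n s) - f (z₀ s)), v s⟫)
        Filter.atTop (nhds 0) := by
  intro t ht v hv
  obtain ⟨ht0, htT⟩ := ht
  have huIoc : Set.uIoc (0 : ℝ) t = Set.Ioc 0 t := Set.uIoc_of_le ht0
  -- the clamped versions
  set proj : ℝ → ℝ := fun s => max 0 (min s T) with hproj
  have hprojcont : Continuous proj := continuous_const.max (continuous_id.min continuous_const)
  have hprojmem : ∀ s, proj s ∈ Set.Icc 0 T :=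
    fun s => ⟨le_max_left _ _, max_le hT.le (min_le_right _ _)⟩
  have hproj_id : ∀ s ∈ Set.Icc 0 T, proj s = s := fun s hs => by
    simp only [hproj, min_eq_left hs.2, max_eq_right hs.1]
  -- the clamped semigroup
  set S' : ℝ → H →L[ℝ] H := fun r => S (max r 0) with hS'
  have contS' : ∀ x, Continuous fun r => S' r x := fun x =>
    (hScont x).comp_continuous (continuous_id.max continuous_const)
      (fun r => Set.mem_Ici.2 (le_max_right r 0))
  have hS'contr : ∀ r, ‖S' r‖ ≤ 1 := fun r => hScontr _ (le_max_right r 0)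
  have hΦ : Continuous fun p : ℝ × H => S' p.1 p.2 := cont_apply_aux S' contS' hS'contr
  -- strong measurability of the composed nonlinearities
  have hcoord : ∀ (u : ℝ → H), ContinuousOn u (Set.Icc 0 T) →
      ∀ y : H, Continuous fun s => ⟪f (u (proj s)), y⟫ := by
    intro u hu y
    have hucont : Continuous fun s => u (proj s) := hu.comp_continuous hprojcont hprojmem
    rw [continuous_iff_seqContinuous]
    intro sk s hsk
    have h1 : Filter.Tendsto (fun k => u (proj (sk k))) Filter.atTop (nhds (u (proj s))) :=
      (hucont.tendsto _).comp hsk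
    exact hf_demi _ _ h1 y
  have hgm : ∀ (u : ℝ → H), ContinuousOn u (Set.Icc 0 T) →
      StronglyMeasurable (fun s => f (u (proj s))) := fun u hu =>
    pettis_measurable _ (fun y => (hcoord u hu y).measurable)
  have hwm : ∀ n, StronglyMeasurable
      (fun s : ℝ => S' (t - s) (f (z n (proj s)) - f (z₀ (proj s)))) := by
    intro n
    have h1 : StronglyMeasurable (fun s : ℝ =>
        ((t - s, f (z n (proj s)) - f (z₀ (proj s))) : ℝ × H)) :=
      ((measurable_const.sub measurable_id).stronglyMeasurable).prodMk
        ((hgm _ (hz_cont n)).sub (hgm _ hz₀_cont))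
    exact hΦ.comp_stronglyMeasurable h1
  have hvm : AEStronglyMeasurable v (volume.restrict (Set.uIoc 0 t)) := by
    rw [huIoc]
    exact hv.aestronglyMeasurable.mono_measure
      (Measure.restrict_mono Set.Ioc_subset_Icc_self le_rfl)
  -- a bound on z₀
  obtain ⟨M, hM⟩ : ∃ M, ∀ s ∈ Set.Icc (0:ℝ) T, ‖z₀ s‖ ≤ M := by
    obtain ⟨r, hr⟩ := (isCompact_Icc.image_of_continuousOn hz₀_cont).isBounded.subset_closedBall 0
    exact ⟨r, fun s hs => by
      simpa [mem_closedBall_zero_iff] using hr ⟨s, hs, rfl⟩⟩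
  set M' : ℝ := max M 0 with hM'
  have hM'0 : ∀ s ∈ Set.Icc (0:ℝ) T, ‖z₀ s‖ ≤ M' := fun s hs => (hM s hs).trans (le_max_left _ _)
  set K : ℝ := 2 * C * (1 + (M' + 1) ^ m) with hK
  -- integrability of the dominating function
  haveI : IsFiniteMeasure (volume.restrict (Set.Icc (0:ℝ) t)) :=
    ⟨by rw [Measure.restrict_apply_univ]; exact measure_Icc_lt_top⟩
  have hv1 : Integrable v (volume.restrict (Set.Icc 0 t)) :=
    memLp_one_iff_integrable.1 (hv.mono_exponent one_le_two)
  have hbi : IntervalIntegrable (fun s => K * ‖v s‖) volume 0 t := by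
    rw [intervalIntegrable_iff]
    rw [huIoc]
    exact ((hv1.norm.const_mul K).mono_measure
      (Measure.restrict_mono Set.Ioc_subset_Icc_self le_rfl))
  -- dominated convergence
  have main := intervalIntegral.tendsto_integral_filter_of_dominated_convergence
    (μ := volume) (a := 0) (b := t) (l := Filter.atTop)
    (F := fun n s => ⟪S (t - s) (f (z n s) - f (z₀ s)), v s⟫)
    (f := fun _ => (0 : ℝ)) (fun s => K * ‖v s‖)
    ?_ ?_ hbi ?_
  · simpa using main
  · -- measurability
    refine Filter.Eventually.of_forall fun n => ?_
    have h1 : AEStronglyMeasurable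
        (fun s => ⟪S' (t - s) (f (z n (proj s)) - f (z₀ (proj s))), v s⟫)
        (volume.restrict (Set.uIoc 0 t)) :=
      (hwm n).aestronglyMeasurable.inner hvm
    refine h1.congr ?_
    rw [huIoc]
    filter_upwards [ae_restrict_mem measurableSet_Ioc] with s hs
    have hsT : s ∈ Set.Icc 0 T := ⟨hs.1.le, hs.2.trans htT⟩
    rw [hproj_id s hsT]
    have : max (t - s) 0 = t - s := max_eq_left (sub_nonneg.2 hs.2)
    simp only [hS', this]
  · -- uniform bound, eventually in n
    have hev : ∀ᶠ n in Filter.atTop, ∀ x ∈ Set.Icc (0:ℝ) T, dist (z₀ x) (z n x) < 1 :=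
      (Metric.tendstoUniformlyOn_iff.1 hz_conv) 1 one_pos
    filter_upwards [hev] with n hn
    refine Filter.Eventually.of_forall fun s hs => ?_
    rw [huIoc] at hs
    have hsT : s ∈ Set.Icc 0 T := ⟨hs.1.le, hs.2.trans htT⟩
    have hzn : ‖z n s‖ ≤ M' + 1 := by
      have h1 : ‖z n s - z₀ s‖ ≤ 1 := by
        have := hn s hsT
        rw [dist_comm, dist_eq_norm] at this
        linarith
      calc ‖z n s‖ = ‖z₀ s + (z n s - z₀ s)‖ := by congr 1; abel
        _ ≤ ‖z₀ s‖ + ‖z n s - z₀ s‖ := norm_add_le _ _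
        _ ≤ M' + 1 := add_le_add (hM'0 s hsT) h1
    have hz0 : ‖z₀ s‖ ≤ M' + 1 := (hM'0 s hsT).trans (by linarith)
    have hd : ‖f (z n s) - f (z₀ s)‖ ≤ K := by
      have c1 : ‖f (z n s)‖ ≤ C * (1 + (M' + 1) ^ m) := by
        refine (hf_growth _).trans ?_
        have : ‖z n s‖ ^ m ≤ (M' + 1) ^ m := pow_le_pow_left₀ (norm_nonneg _) hzn m
        nlinarith
      have c2 : ‖f (z₀ s)‖ ≤ C * (1 + (M' + 1) ^ m) := by
        refine (hf_growth _).trans ?_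
        have : ‖z₀ s‖ ^ m ≤ (M' + 1) ^ m := pow_le_pow_left₀ (norm_nonneg _) hz0 m
        nlinarith
      calc ‖f (z n s) - f (z₀ s)‖ ≤ ‖f (z n s)‖ + ‖f (z₀ s)‖ := norm_sub_le _ _
        _ ≤ K := by rw [hK]; linarith
    have hop : ‖S (t - s) (f (z n s) - f (z₀ s))‖ ≤ K := by
      calc ‖S (t - s) (f (z n s) - f (z₀ s))‖
          ≤ ‖S (t - s)‖ * ‖f (z n s) - f (z₀ s)‖ := (S (t - s)).le_opNorm _
        _ ≤ 1 * K := by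
            refine mul_le_mul (hScontr _ (sub_nonneg.2 hs.2)) hd (norm_nonneg _) zero_le_one
        _ = K := one_mul _
    calc ‖⟪S (t - s) (f (z n s) - f (z₀ s)), v s⟫‖
        ≤ ‖S (t - s) (f (z n s) - f (z₀ s))‖ * ‖v s‖ := norm_inner_le_norm _ _
      _ ≤ K * ‖v s‖ := mul_le_mul_of_nonneg_right hop (norm_nonneg _)
  · -- pointwise convergence
    refine Filter.Eventually.of_forall fun s hs => ?_
    rw [huIoc] at hs
    have hsT : s ∈ Set.Icc 0 T := ⟨hs.1.le, hs.2.trans htT⟩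
    have hzt : Filter.Tendsto (fun n => z n s) Filter.atTop (nhds (z₀ s)) :=
      hz_conv.tendsto_at hsT
    set y : H := ContinuousLinearMap.adjoint (S (t - s)) (v s) with hy
    have hd := hf_demi (fun n => z n s) (z₀ s) hzt y
    have h2 := hd.sub (tendsto_const_nhds (x := ⟪f (z₀ s), y⟫) (f := Filter.atTop))
    rw [sub_self] at h2
    refine h2.congr fun n => ?_
    rw [← inner_sub_left, hy, ContinuousLinearMap.adjoint_inner_right]
end

section
/- Let Ψ : [0,T] → L(U,H) be continuous in the operator norm and such that Ψ(s) is a compact operator for every s ∈ [0,T]. Let N > 0 and let uⁿ ∈ S_N converge weakly to u in L²([0,T];U), i.e. ∫₀ᵀ ⟨uⁿ(s) − u(s), v(s)⟩_U ds → 0 for every v ∈ L²([0,T];U). Then sup_{0≤t≤T} ‖ ∫₀ᵗ Ψ(s)( uⁿ(s) − u(s) ) ds ‖ → 0 as n → ∞. (Deterministic form of Lemma 2.7 as used in Section 4, where Ψ(s) = g(z⁰(s)) with g Hilbert–Schmidt-operator valued and Lipschitz, so that Ψ is operator-norm continuous with compact values.) -/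
set_option maxHeartbeats 1000000


open MeasureTheory
open scoped RealInnerProductSpace

section Aux

private lemma aux_II {E : Type*} [NormedAddCommGroup E] {T a b : ℝ} {f : ℝ → E}
    (hf : Integrable f (volume.restrict (Set.Icc 0 T)))
    (ha : 0 ≤ a) (hb : b ≤ T) (hab : a ≤ b) :
    IntervalIntegrable f volume a b := by
  rw [intervalIntegrable_iff_integrableOn_Ioc_of_le hab]
  exact hf.mono_measure (Measure.restrict_mono
    (Set.Ioc_subset_Icc_self.trans (Set.Icc_subset_Icc ha hb)) le_rfl)

private lemma aux_grid {T : ℝ} (hT : 0 < T) (g : ℕ → ℝ → ℝ)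
    (hpt : ∀ t ∈ Set.Icc (0:ℝ) T, Filter.Tendsto (fun n => g n t) Filter.atTop (nhds 0))
    (hmod : ∀ ε > 0, ∃ δ > 0, ∀ n, ∀ t' ∈ Set.Icc (0:ℝ) T, ∀ t ∈ Set.Icc (0:ℝ) T,
      t' ≤ t → t - t' ≤ δ → |g n t - g n t'| ≤ ε)
    {ε : ℝ} (hε : 0 < ε) :
    ∀ᶠ n in Filter.atTop, ∀ t ∈ Set.Icc (0:ℝ) T, |g n t| ≤ ε := by
  obtain ⟨δ, hδ, hmod'⟩ := hmod (ε/2) (by positivity)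
  set K := Nat.ceil (T/δ) with hK
  have hgrid : ∀ k ∈ Finset.range (K+1),
      ∀ᶠ n in Filter.atTop, |g n (min (k*δ) T)| ≤ ε/2 := by
    intro k _
    have hmem : min ((k:ℝ)*δ) T ∈ Set.Icc (0:ℝ) T :=
      ⟨le_min (by positivity) hT.le, min_le_right _ _⟩
    have hball : ∀ᶠ x in nhds (0:ℝ), |x| ≤ ε/2 := by
      filter_upwards [Metric.closedBall_mem_nhds (0:ℝ) (by positivity : (0:ℝ) < ε/2)] with x hx
      simpa [Real.dist_eq] using hx
    exact (hpt _ hmem).eventually hball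
  have hall := (Filter.eventually_all_finset (Finset.range (K+1))).mpr hgrid
  filter_upwards [hall] with n hn t ht
  set k := Nat.floor (t/δ) with hk
  have hδ0 : δ ≠ 0 := hδ.ne'
  have hk1 : (k:ℝ)*δ ≤ t := by
    have h1 : (k:ℝ) ≤ t/δ := Nat.floor_le (div_nonneg ht.1 hδ.le)
    have := mul_le_mul_of_nonneg_right h1 hδ.le
    rwa [div_mul_cancel₀ _ hδ0] at this
  have hk2 : t - (k:ℝ)*δ ≤ δ := by
    have h1 : t/δ < (k:ℝ) + 1 := Nat.lt_floor_add_one (t/δ)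
    have := mul_lt_mul_of_pos_right h1 hδ
    rw [div_mul_cancel₀ _ hδ0] at this
    nlinarith
  have hkK : k ≤ K := by
    have h1 : t/δ ≤ T/δ := by gcongr; exact ht.2
    calc k = Nat.floor (t/δ) := hk
    _ ≤ Nat.ceil (t/δ) := Nat.floor_le_ceil _
    _ ≤ K := Nat.ceil_le_ceil h1
  have hmin : min ((k:ℝ)*δ) T = (k:ℝ)*δ := min_eq_left (hk1.trans ht.2)
  have hgridpt := hn k (Finset.mem_range.mpr (Nat.lt_succ_of_le hkK))
  rw [hmin] at hgridpt
  have hmem' : (k:ℝ)*δ ∈ Set.Icc (0:ℝ) T := ⟨by positivity, hk1.trans ht.2⟩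
  have hclose := hmod' n _ hmem' t ht hk1 (by linarith)
  calc |g n t| = |(g n t - g n ((k:ℝ)*δ)) + g n ((k:ℝ)*δ)| := by ring_nf
  _ ≤ |g n t - g n ((k:ℝ)*δ)| + |g n ((k:ℝ)*δ)| := abs_add_le _ _
  _ ≤ ε := by linarith

private lemma aux_proj {H : Type*} [NormedAddCommGroup H] [InnerProductSpace ℝ H] [CompleteSpace H]
    {U : Type*} [NormedAddCommGroup U] [InnerProductSpace ℝ U] [CompleteSpace U]
    {T : ℝ} (Ψ : ℝ → U →L[ℝ] H)
    (hΨ_cont : ContinuousOn Ψ (Set.Icc 0 T))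
    (hΨ_cpt : ∀ s ∈ Set.Icc (0 : ℝ) T, IsCompactOperator (Ψ s))
    {ε : ℝ} (hε : 0 < ε) :
    ∃ (V : Submodule ℝ H) (_ : FiniteDimensional ℝ V),
      ∀ s ∈ Set.Icc (0:ℝ) T, ∀ x : U,
        ‖Ψ s x - (V.orthogonalProjectionOnto (Ψ s x) : H)‖ ≤ ε * ‖x‖ := by
  classical
  have hKcpt : IsCompact (Ψ '' Set.Icc 0 T) := isCompact_Icc.image_of_continuousOn hΨ_cont
  obtain ⟨t, ht⟩ := hKcpt.elim_finite_subcover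
    (fun s : Set.Icc (0:ℝ) T => Metric.ball (Ψ s) (ε/4))
    (fun s => Metric.isOpen_ball)
    (by rintro A ⟨s, hs, rfl⟩
        exact Set.mem_iUnion.2 ⟨⟨s, hs⟩, Metric.mem_ball_self (by positivity)⟩)
  have hnets : ∀ s : Set.Icc (0:ℝ) T, ∃ F : Set H, F.Finite ∧
      ∀ x : U, ‖x‖ ≤ 1 → ∃ y ∈ F, ‖Ψ s x - y‖ < ε/4 := by
    intro s
    have hcpt : IsCompact (closure (⇑(Ψ s) '' Metric.closedBall 0 1)) :=
      IsCompactOperator.isCompact_closure_image_closedBall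
        (f := ((Ψ s : U →L[ℝ] H) : U →ₗ[ℝ] H)) (hΨ_cpt s s.2) 1
    have htb : TotallyBounded (⇑(Ψ s) '' Metric.closedBall 0 1) :=
      hcpt.totallyBounded.subset subset_closure
    obtain ⟨F, hFfin, hF⟩ := Metric.totallyBounded_iff.mp htb (ε/4) (by positivity)
    refine ⟨F, hFfin, fun x hx => ?_⟩
    have hxmem : Ψ s x ∈ ⇑(Ψ s) '' Metric.closedBall 0 1 :=
      Set.mem_image_of_mem _ (by simpa [Metric.mem_closedBall, dist_zero_right] using hx)
    obtain ⟨y, hyF, hy⟩ := Set.mem_iUnion₂.mp (hF hxmem)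
    exact ⟨y, hyF, by simpa [dist_eq_norm] using hy⟩
  choose net hnetfin hnet using hnets
  set V : Submodule ℝ H := Submodule.span ℝ (⋃ i ∈ t, net i) with hV
  have hVfin : FiniteDimensional ℝ V :=
    FiniteDimensional.span_of_finite ℝ (t.finite_toSet.biUnion fun i _ => hnetfin i)
  haveI := hVfin
  refine ⟨V, hVfin, ?_⟩
  have key : ∀ s ∈ Set.Icc (0:ℝ) T, ∀ x : U, ‖x‖ ≤ 1 →
      ‖Ψ s x - (V.orthogonalProjectionOnto (Ψ s x) : H)‖ ≤ ε := by
    intro s hs x hx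
    have hΨs : Ψ s ∈ ⋃ i ∈ t, Metric.ball (Ψ (i : ℝ)) (ε/4) := ht (Set.mem_image_of_mem Ψ hs)
    obtain ⟨i, hi, hball⟩ := Set.mem_iUnion₂.mp hΨs
    obtain ⟨y, hyF, hy⟩ := hnet i x hx
    have hyV : y ∈ V := Submodule.subset_span (Set.mem_biUnion hi hyF)
    have h1 : ‖Ψ s x - Ψ (i:ℝ) x‖ ≤ ε/4 := by
      have hop : ‖Ψ s - Ψ (i:ℝ)‖ ≤ ε/4 := by
        rw [Metric.mem_ball, dist_eq_norm] at hball
        exact hball.le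
      calc ‖Ψ s x - Ψ (i:ℝ) x‖ = ‖(Ψ s - Ψ (i:ℝ)) x‖ := by
            simp [ContinuousLinearMap.sub_apply]
      _ ≤ ‖Ψ s - Ψ (i:ℝ)‖ * ‖x‖ := (Ψ s - Ψ (i:ℝ)).le_opNorm x
      _ ≤ (ε/4) * 1 := mul_le_mul hop hx (norm_nonneg _) (by positivity)
      _ = ε/4 := mul_one _
    have hmin : ‖Ψ s x - (V.orthogonalProjectionOnto (Ψ s x) : H)‖ ≤ ‖Ψ s x - y‖ := by
      rw [Submodule.coe_orthogonalProjectionOnto_apply, Submodule.starProjection_minimal]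
      exact ciInf_le ⟨0, by rintro _ ⟨v, rfl⟩; exact norm_nonneg _⟩ (⟨y, hyV⟩ : V)
    calc ‖Ψ s x - (V.orthogonalProjectionOnto (Ψ s x) : H)‖ ≤ ‖Ψ s x - y‖ := hmin
    _ ≤ ‖Ψ s x - Ψ (i:ℝ) x‖ + ‖Ψ (i:ℝ) x - y‖ := norm_sub_le_norm_sub_add_norm_sub _ _ _
    _ ≤ ε/4 + ε/4 := add_le_add h1 hy.le
    _ ≤ ε := by linarith
  intro s hs x
  rcases eq_or_ne x 0 with rfl | hx0
  · simp
  · have hn0 : (0:ℝ) < ‖x‖ := norm_pos_iff.mpr hx0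
    have hx1 : ‖(‖x‖⁻¹ • x)‖ ≤ 1 := by
      rw [norm_smul, norm_inv, norm_norm, inv_mul_cancel₀ hn0.ne']
    have hk := key s hs _ hx1
    rw [ContinuousLinearMap.map_smul] at hk
    have hps : (V.orthogonalProjectionOnto (‖x‖⁻¹ • Ψ s x) : H)
        = ‖x‖⁻¹ • (V.orthogonalProjectionOnto (Ψ s x) : H) := by
      rw [_root_.map_smul]; rfl
    rw [hps, ← smul_sub, norm_smul, norm_inv, norm_norm] at hk
    calc ‖Ψ s x - (V.orthogonalProjectionOnto (Ψ s x) : H)‖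
        = ‖x‖ * (‖x‖⁻¹ * ‖Ψ s x - (V.orthogonalProjectionOnto (Ψ s x) : H)‖) := by
          field_simp
    _ ≤ ‖x‖ * ε := by
          exact mul_le_mul_of_nonneg_left hk hn0.le
    _ = ε * ‖x‖ := mul_comm _ _

end Aux

/-- Deterministic form of Lemma 2.7 as used in Section 4: uniform convergence of
convolutions against weakly convergent controls, for operator-norm continuous,
compact-operator-valued `Ψ`. -/


theorem uniform_convergence_weak_controls
    {H : Type*} [NormedAddCommGroup H] [InnerProductSpace ℝ H] [CompleteSpace H]
    [TopologicalSpace.SeparableSpace H]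
    {U : Type*} [NormedAddCommGroup U] [InnerProductSpace ℝ U] [CompleteSpace U]
    [TopologicalSpace.SeparableSpace U]
    (T : ℝ) (hT : 0 < T)
    (Ψ : ℝ → U →L[ℝ] H)
    (hΨ_cont : ContinuousOn Ψ (Set.Icc 0 T))
    (hΨ_cpt : ∀ s ∈ Set.Icc (0 : ℝ) T, IsCompactOperator (Ψ s))
    (N : ℝ) (hN : 0 < N)
    (u : ℕ → ℝ → U) (u₀ : ℝ → U)
    (hu : ∀ n, MemLp (u n) 2 (volume.restrict (Set.Icc 0 T)))
    (huN : ∀ n, (∫ s in (0 : ℝ)..T, ‖u n s‖ ^ 2) ≤ N)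
    (hu₀ : MemLp u₀ 2 (volume.restrict (Set.Icc 0 T)))
    (hu_weak : ∀ v : ℝ → U, MemLp v 2 (volume.restrict (Set.Icc 0 T)) →
      Filter.Tendsto (fun n => ∫ s in (0 : ℝ)..T, ⟪u n s - u₀ s, v s⟫)
        Filter.atTop (nhds 0)) :
    TendstoUniformlyOn
      (fun n t => ∫ s in (0 : ℝ)..t, Ψ s (u n s - u₀ s))
      (fun _ => 0) Filter.atTop (Set.Icc (0 : ℝ) T) := by
  classical
  have h0T : (0:ℝ) ≤ T := hT.le
  set w : ℕ → ℝ → U := fun n s => u n s - u₀ s with hw_def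
  -- basic integrability facts
  have hwmem : ∀ n, MemLp (w n) 2 (volume.restrict (Set.Icc 0 T)) := fun n => (hu n).sub hu₀
  have hwint : ∀ n, Integrable (w n) (volume.restrict (Set.Icc 0 T)) :=
    fun n => (hwmem n).integrable (by norm_num)
  have hwsq : ∀ n, Integrable (fun s => ‖w n s‖^2) (volume.restrict (Set.Icc 0 T)) :=
    fun n => (hwmem n).norm.integrable_sq
  have husq : ∀ n, Integrable (fun s => ‖u n s‖^2) (volume.restrict (Set.Icc 0 T)) :=
    fun n => (hu n).norm.integrable_sq
  have hu₀sq : Integrable (fun s => ‖u₀ s‖^2) (volume.restrict (Set.Icc 0 T)) :=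
    hu₀.norm.integrable_sq
  -- operator norm bound
  obtain ⟨C₀, hC₀⟩ := isCompact_Icc.exists_bound_of_continuousOn hΨ_cont
  set C := max C₀ 0 with hC_def
  have hC : ∀ s ∈ Set.Icc (0:ℝ) T, ‖Ψ s‖ ≤ C := fun s hs => (hC₀ s hs).trans (le_max_left _ _)
  have hC0 : 0 ≤ C := le_max_right _ _
  -- measurability & integrability of the integrand
  haveI : SecondCountableTopologyEither ℝ (U →L[ℝ] H) :=
    ⟨Or.inl inferInstance⟩
  haveI : SecondCountableTopologyEither ℝ U := ⟨Or.inl inferInstance⟩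
  have hΨw_meas : ∀ n, AEStronglyMeasurable (fun s => Ψ s (w n s))
      (volume.restrict (Set.Icc 0 T)) := by
    intro n
    have h1 : AEStronglyMeasurable (fun s => (Ψ s, w n s)) (volume.restrict (Set.Icc 0 T)) :=
      (hΨ_cont.aestronglyMeasurable measurableSet_Icc).prodMk (hwmem n).1
    exact isBoundedBilinearMap_apply.continuous.comp_aestronglyMeasurable h1
  have hΨw_int : ∀ n, Integrable (fun s => Ψ s (w n s)) (volume.restrict (Set.Icc 0 T)) := by
    intro n
    refine ((hwint n).norm.const_mul C).mono' (hΨw_meas n) ?_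
    filter_upwards [ae_restrict_mem measurableSet_Icc] with s hs
    exact ((Ψ s).le_opNorm _).trans
      (mul_le_mul_of_nonneg_right (hC s hs) (norm_nonneg _))
  -- L² bound
  set M := 2*N + 2*(∫ s in (0:ℝ)..T, ‖u₀ s‖^2) + 1 with hM_def
  have hu₀sq_nonneg : 0 ≤ ∫ s in (0:ℝ)..T, ‖u₀ s‖^2 :=
    intervalIntegral.integral_nonneg h0T (fun s _ => by positivity)
  have hM0 : 0 < M := by simp only [hM_def]; linarith
  have hMw : ∀ n, (∫ s in (0:ℝ)..T, ‖w n s‖^2) ≤ M := by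
    intro n
    have hIIu : IntervalIntegrable (fun s => ‖u n s‖^2) volume 0 T :=
      aux_II (husq n) le_rfl le_rfl h0T
    have hIIu₀ : IntervalIntegrable (fun s => ‖u₀ s‖^2) volume 0 T :=
      aux_II hu₀sq le_rfl le_rfl h0T
    have h1 : (∫ s in (0:ℝ)..T, ‖w n s‖^2)
        ≤ ∫ s in (0:ℝ)..T, (2*‖u n s‖^2 + 2*‖u₀ s‖^2) := by
      refine intervalIntegral.integral_mono_on h0T (aux_II (hwsq n) le_rfl le_rfl h0T)
        (((hIIu.const_mul 2)).add ((hIIu₀.const_mul 2))) (fun s _ => ?_)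
      have h2 : ‖w n s‖ ≤ ‖u n s‖ + ‖u₀ s‖ := norm_sub_le (u n s) (u₀ s)
      have h3 : ‖w n s‖^2 ≤ (‖u n s‖ + ‖u₀ s‖)^2 := by
        have := pow_le_pow_left₀ (norm_nonneg (w n s)) h2 2
        exact this
      nlinarith [sq_nonneg (‖u n s‖ - ‖u₀ s‖)]
    have h2 : (∫ s in (0:ℝ)..T, (2*‖u n s‖^2 + 2*‖u₀ s‖^2))
        = 2*(∫ s in (0:ℝ)..T, ‖u n s‖^2) + 2*(∫ s in (0:ℝ)..T, ‖u₀ s‖^2) := by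
      rw [intervalIntegral.integral_add (hIIu.const_mul 2) (hIIu₀.const_mul 2),
        intervalIntegral.integral_const_mul, intervalIntegral.integral_const_mul]
    have := huN n
    rw [h2] at h1
    simp only [hM_def]
    linarith
  -- AM-GM L¹ bound
  have hL1 : ∀ n, ∀ c, 0 < c → ∀ t' ∈ Set.Icc (0:ℝ) T, ∀ t ∈ Set.Icc (0:ℝ) T, t' ≤ t →
      (∫ s in t'..t, ‖w n s‖) ≤ M/(2*c) + c*(t-t')/2 := by
    intro n c hc t' ht' t ht htt
    have hIIn : IntervalIntegrable (fun s => ‖w n s‖) volume t' t :=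
      aux_II (hwint n).norm ht'.1 ht.2 htt
    have hIIsq : IntervalIntegrable (fun s => ‖w n s‖^2) volume t' t :=
      aux_II (hwsq n) ht'.1 ht.2 htt
    have step1 : (∫ s in t'..t, ‖w n s‖)
        ≤ ∫ s in t'..t, (‖w n s‖^2/(2*c) + c/2) := by
      refine intervalIntegral.integral_mono_on htt hIIn
        ((hIIsq.div_const (2*c)).add intervalIntegrable_const) (fun s _ => ?_)
      have h2c : (0:ℝ) < 2*c := by linarith
      have key : ‖w n s‖^2/(2*c) + c/2 - ‖w n s‖ = (‖w n s‖ - c)^2 / (2*c) := by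
        field_simp; ring
      have h4 : (0:ℝ) ≤ ‖w n s‖^2/(2*c) + c/2 - ‖w n s‖ :=
        key ▸ div_nonneg (sq_nonneg _) h2c.le
      linarith
    have step2 : (∫ s in t'..t, ‖w n s‖^2) ≤ M := by
      refine le_trans ?_ (hMw n)
      refine intervalIntegral.integral_mono_interval ht'.1 htt ht.2 ?_
        (aux_II (hwsq n) le_rfl le_rfl h0T)
      filter_upwards with s
      positivity
    have step3 : (∫ s in t'..t, (‖w n s‖^2/(2*c) + c/2))
        = (∫ s in t'..t, ‖w n s‖^2)/(2*c) + c*(t-t')/2 := by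
      rw [intervalIntegral.integral_add (hIIsq.div_const (2*c)) intervalIntegrable_const,
        intervalIntegral.integral_div, intervalIntegral.integral_const]
      ring_nf
    have h2c : (0:ℝ) < 2*c := by linarith
    calc (∫ s in t'..t, ‖w n s‖) ≤ (∫ s in t'..t, ‖w n s‖^2)/(2*c) + c*(t-t')/2 := by
          rw [← step3]; exact step1
    _ ≤ M/(2*c) + c*(t-t')/2 := by gcongr
  -- scalar uniform convergence
  have hscalar : ∀ e : H, ∀ ε > 0, ∀ᶠ n in Filter.atTop, ∀ t ∈ Set.Icc (0:ℝ) T,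
      |∫ s in (0:ℝ)..t, ⟪Ψ s (w n s), e⟫| ≤ ε := by
    intro e ε hε
    refine aux_grid hT (fun n t => ∫ s in (0:ℝ)..t, ⟪Ψ s (w n s), e⟫) ?_ ?_ hε
    · -- pointwise convergence
      intro t ht
      set f : ℝ → U := fun s => (ContinuousLinearMap.adjoint (Ψ s)) e with hf_def
      have hf_cont : ContinuousOn f (Set.Icc 0 T) := by
        have h1 : Continuous fun A : U →L[ℝ] H => (ContinuousLinearMap.adjoint A) e :=
          (ContinuousLinearMap.apply ℝ U e).continuous.comp
            (ContinuousLinearMap.adjoint (𝕜 := ℝ) (E := U) (F := H)).continuous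
        exact h1.comp_continuousOn hΨ_cont
      set v : ℝ → U := Set.indicator (Set.Icc 0 t) f with hv_def
      have hv_meas : AEStronglyMeasurable v (volume.restrict (Set.Icc 0 T)) :=
        (hf_cont.aestronglyMeasurable measurableSet_Icc).indicator measurableSet_Icc
      have hv_bd : ∀ s, ‖v s‖ ≤ C * ‖e‖ := by
        intro s
        by_cases hs : s ∈ Set.Icc 0 t
        · rw [hv_def, Set.indicator_of_mem hs]
          calc ‖f s‖ ≤ ‖ContinuousLinearMap.adjoint (Ψ s)‖ * ‖e‖ :=
                (ContinuousLinearMap.adjoint (Ψ s)).le_opNorm e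
          _ = ‖Ψ s‖ * ‖e‖ := by
                rw [LinearIsometryEquiv.norm_map]
          _ ≤ C * ‖e‖ := by
                have hsT : s ∈ Set.Icc (0:ℝ) T := ⟨hs.1, hs.2.trans ht.2⟩
                exact mul_le_mul_of_nonneg_right (hC s hsT) (norm_nonneg _)
        · rw [hv_def, Set.indicator_of_notMem hs]
          simp only [norm_zero]
          positivity
      have hv_mem : MemLp v 2 (volume.restrict (Set.Icc 0 T)) :=
        MemLp.of_bound hv_meas _ (Filter.Eventually.of_forall hv_bd)
      refine (hu_weak v hv_mem).congr (fun n => ?_)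
      have heq : ∀ s ∈ Set.uIcc (0:ℝ) T, ⟪u n s - u₀ s, v s⟫
          = Set.indicator {x : ℝ | x ≤ t} (fun s => ⟪Ψ s (w n s), e⟫) s := by
        intro s hs
        rw [Set.uIcc_of_le h0T] at hs
        by_cases hst : s ≤ t
        · have hmem : s ∈ Set.Icc 0 t := ⟨hs.1, hst⟩
          rw [hv_def, Set.indicator_of_mem hmem,
            Set.indicator_of_mem (show s ∈ {x : ℝ | x ≤ t} from hst)]
          exact ContinuousLinearMap.adjoint_inner_right _ _ _
        · have hmem : s ∉ Set.Icc 0 t := fun hmem => hst hmem.2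
          rw [hv_def, Set.indicator_of_notMem hmem,
            Set.indicator_of_notMem (show s ∉ {x : ℝ | x ≤ t} from hst),
            inner_zero_right]
      calc (∫ s in (0:ℝ)..T, ⟪u n s - u₀ s, v s⟫)
          = ∫ s in (0:ℝ)..T, Set.indicator {x : ℝ | x ≤ t}
              (fun s => ⟪Ψ s (w n s), e⟫) s := intervalIntegral.integral_congr heq
      _ = ∫ s in (0:ℝ)..t, ⟪Ψ s (w n s), e⟫ :=
          intervalIntegral.integral_indicator ⟨ht.1, ht.2⟩
    · -- modulus of continuity
      intro ε' hε'
      set ce := C*‖e‖ + 1 with hce_def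
      have hce : 0 < ce := by positivity
      set c := ce*M/ε' with hc_def
      have hc : 0 < c := by positivity
      refine ⟨ε'/(ce*c), by positivity, ?_⟩
      intro n t' ht' t ht htt hdlt
      have hII0t : IntervalIntegrable (fun s => ⟪Ψ s (w n s), e⟫) volume 0 t := by
        refine aux_II ?_ le_rfl ht.2 ht.1
        exact (hΨw_int n).inner_const e
      have hII0t' : IntervalIntegrable (fun s => ⟪Ψ s (w n s), e⟫) volume 0 t' := by
        refine aux_II ?_ le_rfl ht'.2 ht'.1
        exact (hΨw_int n).inner_const e
      have hsub : (∫ s in (0:ℝ)..t, ⟪Ψ s (w n s), e⟫) - (∫ s in (0:ℝ)..t', ⟪Ψ s (w n s), e⟫)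
          = ∫ s in t'..t, ⟪Ψ s (w n s), e⟫ :=
        intervalIntegral.integral_interval_sub_left hII0t hII0t'
      rw [hsub]
      have habs : |∫ s in t'..t, ⟪Ψ s (w n s), e⟫| ≤ ∫ s in t'..t, (C*‖e‖) * ‖w n s‖ := by
        refine (intervalIntegral.abs_integral_le_integral_abs htt).trans ?_
        refine intervalIntegral.integral_mono_on htt ?_ ?_ (fun s hs => ?_)
        · exact (aux_II ((hΨw_int n).inner_const e) ht'.1 ht.2 htt).abs
        · exact (aux_II (hwint n).norm ht'.1 ht.2 htt).const_mul _
        · have hsT : s ∈ Set.Icc (0:ℝ) T := ⟨ht'.1.trans hs.1, hs.2.trans ht.2⟩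
          calc |⟪Ψ s (w n s), e⟫| ≤ ‖Ψ s (w n s)‖ * ‖e‖ := abs_real_inner_le_norm _ _
          _ ≤ (‖Ψ s‖ * ‖w n s‖) * ‖e‖ :=
              mul_le_mul_of_nonneg_right ((Ψ s).le_opNorm _) (norm_nonneg _)
          _ ≤ (C * ‖w n s‖) * ‖e‖ := by
              have := mul_le_mul_of_nonneg_right (hC s hsT) (norm_nonneg (w n s))
              exact mul_le_mul_of_nonneg_right this (norm_nonneg _)
          _ = (C*‖e‖) * ‖w n s‖ := by ring
      rw [intervalIntegral.integral_const_mul] at habs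
      have hL1' := hL1 n c hc t' ht' t ht htt
      have hbd : (C*‖e‖) * (∫ s in t'..t, ‖w n s‖) ≤ ce * (M/(2*c) + c*(t-t')/2) := by
        refine mul_le_mul ?_ hL1' ?_ hce.le
        · simp only [hce_def]; linarith
        · refine intervalIntegral.integral_nonneg htt (fun s _ => norm_nonneg _)
      refine habs.trans (hbd.trans ?_)
      have h1 : ce * (M/(2*c)) = ε'/2 := by
        rw [hc_def]; field_simp
      have h2 : ce * (c*(t-t')/2) ≤ ε'/2 := by
        have hpos : (0:ℝ) < ce*c := by positivity
        have h3 : ce*c*(t-t') ≤ ε' := by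
          have h4 := mul_le_mul_of_nonneg_left hdlt hpos.le
          rwa [mul_comm (ce*c) (ε'/(ce*c)), div_mul_cancel₀ _ hpos.ne'] at h4
        nlinarith
      calc ce * (M/(2*c) + c*(t-t')/2) = ce * (M/(2*c)) + ce * (c*(t-t')/2) := by ring
      _ ≤ ε'/2 + ε'/2 := add_le_add h1.le h2
      _ = ε' := by ring
  -- assemble
  rw [Metric.tendstoUniformlyOn_iff]
  intro ε hε
  set B := M/2 + T/2 with hB_def
  have hB0 : 0 < B := by simp only [hB_def]; linarith
  have hL1B : ∀ n, ∀ t ∈ Set.Icc (0:ℝ) T, (∫ s in (0:ℝ)..t, ‖w n s‖) ≤ B := by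
    intro n t ht
    have := hL1 n 1 one_pos 0 ⟨le_rfl, h0T⟩ t ht ht.1
    simp only [hB_def]
    have htT : t - 0 ≤ T := by linarith [ht.2]
    nlinarith
  have hε₁ : (0:ℝ) < ε/(2*(B+1)) := by positivity
  obtain ⟨V, hVfd, hV⟩ := aux_proj Ψ hΨ_cont hΨ_cpt hε₁
  haveI := hVfd
  set d := Module.finrank ℝ V with hd_def
  set b := stdOrthonormalBasis ℝ V with hb_def
  set Pc : H →L[ℝ] H := V.subtypeL.comp (V.orthogonalProjectionOnto) with hPc_def
  have hPc : ∀ y, Pc y = (V.orthogonalProjectionOnto y : H) := fun y => rfl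
  have hεd : (0:ℝ) < ε/(2*(d+1)) := by positivity
  have hev : ∀ᶠ n in Filter.atTop, ∀ j : Fin d, ∀ t ∈ Set.Icc (0:ℝ) T,
      |∫ s in (0:ℝ)..t, ⟪Ψ s (w n s), (b j : H)⟫| ≤ ε/(2*(d+1)) :=
    Filter.eventually_all.mpr (fun j => hscalar (b j : H) _ hεd)
  filter_upwards [hev] with n hn t ht
  have hII : IntervalIntegrable (fun s => Ψ s (w n s)) volume 0 t :=
    aux_II (hΨw_int n) le_rfl ht.2 ht.1
  have hII_P : IntervalIntegrable (fun s => Pc (Ψ s (w n s))) volume 0 t :=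
    aux_II (Pc.integrable_comp (hΨw_int n)) le_rfl ht.2 ht.1
  have hsplit : (∫ s in (0:ℝ)..t, Ψ s (w n s))
      = (∫ s in (0:ℝ)..t, (Ψ s (w n s) - Pc (Ψ s (w n s))))
        + Pc (∫ s in (0:ℝ)..t, Ψ s (w n s)) := by
    rw [← ContinuousLinearMap.intervalIntegral_comp_comm Pc hII,
      ← intervalIntegral.integral_add (hII.sub hII_P) hII_P]
    simp
  have h1 : ‖∫ s in (0:ℝ)..t, (Ψ s (w n s) - Pc (Ψ s (w n s)))‖ ≤ (ε/(2*(B+1))) * B := by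
    calc ‖∫ s in (0:ℝ)..t, (Ψ s (w n s) - Pc (Ψ s (w n s)))‖
        ≤ ∫ s in (0:ℝ)..t, ‖Ψ s (w n s) - Pc (Ψ s (w n s))‖ :=
          intervalIntegral.norm_integral_le_integral_norm ht.1
    _ ≤ ∫ s in (0:ℝ)..t, (ε/(2*(B+1))) * ‖w n s‖ := by
          refine intervalIntegral.integral_mono_on ht.1 ((hII.sub hII_P).norm)
            ((aux_II (hwint n).norm le_rfl ht.2 ht.1).const_mul _) (fun s hs => ?_)
          have hsT : s ∈ Set.Icc (0:ℝ) T := ⟨hs.1, hs.2.trans ht.2⟩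
          rw [hPc]
          exact hV s hsT (w n s)
    _ = (ε/(2*(B+1))) * (∫ s in (0:ℝ)..t, ‖w n s‖) := intervalIntegral.integral_const_mul _ _
    _ ≤ (ε/(2*(B+1))) * B :=
          mul_le_mul_of_nonneg_left (hL1B n t ht) hε₁.le
  have h3 : ∀ j : Fin d, ⟪(b j : H), ∫ s in (0:ℝ)..t, Ψ s (w n s)⟫
      = ∫ s in (0:ℝ)..t, ⟪Ψ s (w n s), (b j : H)⟫ := by
    intro j
    have hcc := ContinuousLinearMap.intervalIntegral_comp_comm (innerSL ℝ ((b j : H))) hII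
    simp only [innerSL_apply_apply] at hcc
    rw [← hcc]
    exact intervalIntegral.integral_congr (fun s _ => real_inner_comm _ _)
  have h2 : ‖Pc (∫ s in (0:ℝ)..t, Ψ s (w n s))‖
      ≤ ∑ j : Fin d, |∫ s in (0:ℝ)..t, ⟪Ψ s (w n s), (b j : H)⟫| := by
    rw [hPc, b.orthogonalProjectionOnto_apply_eq_sum]
    push_cast
    refine (norm_sum_le _ _).trans ?_
    refine Finset.sum_le_sum (fun j _ => ?_)
    rw [norm_smul]
    have hbj : ‖(b j : H)‖ = 1 := by
      have := b.orthonormal.1 j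
      exact this
    rw [hbj, mul_one, Real.norm_eq_abs, h3 j]
  have h2' : (∑ j : Fin d, |∫ s in (0:ℝ)..t, ⟪Ψ s (w n s), (b j : H)⟫|)
      ≤ d * (ε/(2*(d+1))) := by
    calc (∑ j : Fin d, |∫ s in (0:ℝ)..t, ⟪Ψ s (w n s), (b j : H)⟫|)
        ≤ ∑ _j : Fin d, ε/(2*(d+1)) := Finset.sum_le_sum (fun j _ => hn j t ht)
    _ = d * (ε/(2*(d+1))) := by simp [Finset.sum_const, mul_comm]
  have hfinal : ‖∫ s in (0:ℝ)..t, Ψ s (w n s)‖ < ε := by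
    have hsum : ‖∫ s in (0:ℝ)..t, Ψ s (w n s)‖
        ≤ (ε/(2*(B+1))) * B + d * (ε/(2*(d+1))) := by
      rw [hsplit]
      exact (norm_add_le _ _).trans (add_le_add h1 (h2.trans h2'))
    have hq1 : (ε/(2*(B+1))) * B < ε/2 := by
      rw [div_mul_eq_mul_div, div_lt_iff₀ (by positivity)]
      nlinarith
    have hq2 : (d:ℝ) * (ε/(2*(d+1))) < ε/2 := by
      rw [mul_div_assoc']
      rw [div_lt_iff₀ (by positivity)]
      have : (0:ℝ) < (d:ℝ) + 1 := by positivity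
      nlinarith [Nat.cast_nonneg (α := ℝ) d]
    linarith
  simpa only [dist_zero_left] using hfinal
end
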